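/- The period function T(h) of the circular Sitnikov problem is strictly increasing on (−2, 0): dT/dh > 0 for all h ∈ (−2, 0). -/

import Mathlib

open Real Set Filter

/-- Complete elliptic integral of the first kind. -/
noncomputable def ellipticK (k : ℝ) : ℝ :=
  ∫ t in (0 : ℝ)..1, 1 / (Real.sqrt (1 - t^2) * Real.sqrt (1 - k^2 * t^2))

/-- Complete elliptic integral of the second kind. -/
noncomputable def ellipticE (k : ℝ) : ℝ :=
  ∫ t in (0 : ℝ)..1, Real.sqrt (1 - k^2 * t^2) / Real.sqrt (1 - t^2)

/-- Complete elliptic integral of the third kind. -/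
noncomputable def ellipticPi (n k : ℝ) : ℝ :=
  ∫ t in (0 : ℝ)..1,
    1 / ((1 - n * t^2) * Real.sqrt (1 - t^2) * Real.sqrt (1 - k^2 * t^2))

/-- The period function of the circular Sitnikov problem. -/
noncomputable def sitnikovT (h : ℝ) : ℝ :=
  let k := Real.sqrt (2 + h) / 2
  (Real.sqrt 2 / (2 * (1 - 2 * k^2))) *
    (2 * ellipticE k - ellipticK k + ellipticPi (2 * k^2) k)


open MeasureTheory intervalIntegral

/-- master integrability lemma -/
lemma intAux {f : ℝ → ℝ} (hm : AEStronglyMeasurable f (volume.restrict (Set.uIoc (0:ℝ) 1)))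
    {c : ℝ} (hc : 0 ≤ c)
    (hb : ∀ t ∈ Set.Ioo (0:ℝ) 1, |f t| ≤ c / Real.sqrt (1 - t^2)) :
    IntervalIntegrable f volume 0 1 := by
  have hg : IntervalIntegrable (fun t => c * (1 - t) ^ (-(1/2) : ℝ)) volume 0 1 := by
    have h1 : IntervalIntegrable (fun x : ℝ => x ^ (-(1/2) : ℝ)) volume 0 1 :=
      intervalIntegral.intervalIntegrable_rpow' (by norm_num)
    have h2 := (h1.comp_sub_left 1)
    simp only [sub_zero, sub_self] at h2
    exact (h2.symm).const_mul c
  apply hg.mono_fun hm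
  rw [Filter.EventuallyLE, ae_restrict_iff' measurableSet_uIoc]
  have hone : ∀ᵐ t : ℝ, t ≠ (1:ℝ) := by
    rw [ae_iff]
    have : {a : ℝ | ¬a ≠ 1} = {(1:ℝ)} := by ext t; simp
    rw [this]; exact measure_singleton 1
  filter_upwards [hone] with t ht1 ht
  rw [Set.uIoc_of_le (by norm_num : (0:ℝ) ≤ 1)] at ht
  have htI : t ∈ Set.Ioo (0:ℝ) 1 := ⟨ht.1, lt_of_le_of_ne ht.2 ht1⟩
  have h1t : 0 < 1 - t := by linarith [htI.2]
  have h1t2 : (0:ℝ) < 1 - t^2 := by nlinarith [htI.1, htI.2]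
  have hs : Real.sqrt (1 - t) ≤ Real.sqrt (1 - t^2) :=
    Real.sqrt_le_sqrt (by nlinarith [htI.1])
  have hsp : 0 < Real.sqrt (1 - t) := Real.sqrt_pos.mpr h1t
  calc ‖f t‖ = |f t| := rfl
    _ ≤ c / Real.sqrt (1 - t^2) := hb t htI
    _ ≤ c / Real.sqrt (1 - t) := by
        apply div_le_div_of_nonneg_left hc hsp hs
    _ = c * (1-t) ^ (-(1/2) : ℝ) := by
        rw [Real.rpow_neg h1t.le, ← Real.sqrt_eq_rpow, div_eq_mul_inv]
    _ ≤ ‖c * (1-t) ^ (-(1/2) : ℝ)‖ := le_abs_self _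


noncomputable def Fi (m t : ℝ) : ℝ :=
  Real.sqrt 2 * (1 - 2*m*t^2 + 2*m^2*t^4) /
    ((1 - 2*m) * (1 - 2*m*t^2) * Real.sqrt (1 - t^2) * Real.sqrt (1 - m*t^2))

noncomputable def Qp (m t : ℝ) : ℝ :=
  2 + t^2/2 - 11*m*t^2 + 2*m*t^4 + 16*m^2*t^4 - 5*m^2*t^6 - 10*m^3*t^6 + 2*m^3*t^8 + 4*m^4*t^8

noncomputable def Fi' (m t : ℝ) : ℝ :=
  Real.sqrt 2 * Qp m t /
    (Real.sqrt (1 - t^2) * ((1-2*m)^2 * (1-2*m*t^2)^2 * (1-m*t^2) * Real.sqrt (1 - m*t^2)))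

set_option maxHeartbeats 1000000 in
lemma Qp_pos {m t : ℝ} (hm : 0 < m) (hm2 : m < 1/2) (ht : 0 ≤ t) (ht1 : t ≤ 1) :
    0 < Qp m t := by
  have key : Qp m t = ((1-t^2)*(1+(1-t^2)+(1-t^2)^2+(1-t^2)^3)
      + (1-2*m)*t^2*((7/2)*(1-t^2)^3+2*(1-t^2)^2+(7/2)*(1-t^2)+2)
      + (1-2*m)^2*t^4*((9/2)*(1-t^2)^2+(1-t^2)+5/2)
      + (5/2)*(1-2*m)^3*(1-t^2)*t^6 + (1/2)*(1-2*m)^4*t^8)/2 := by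
    unfold Qp; ring
  rw [key]
  have h1 : (0:ℝ) ≤ 1 - t^2 := by nlinarith
  have h2 : (0:ℝ) < 1 - 2*m := by linarith
  have ht2 : (0:ℝ) ≤ t^2 := sq_nonneg t
  have hh2 : (0:ℝ) ≤ (1-2*m)^2*t^4*((9/2)*(1-t^2)^2+(1-t^2)+5/2) := by positivity
  have hh3 : (0:ℝ) ≤ (5/2)*(1-2*m)^3*(1-t^2)*t^6 := by positivity
  have hh4 : (0:ℝ) ≤ (1/2)*(1-2*m)^4*t^8 := by positivity
  rcases le_or_gt (t^2) (1/2) with hc | hc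
  · have hh0 : (1:ℝ)/2 ≤ (1-t^2)*(1+(1-t^2)+(1-t^2)^2+(1-t^2)^3) := by nlinarith
    have hh1 : (0:ℝ) ≤ (1-2*m)*t^2*((7/2)*(1-t^2)^3+2*(1-t^2)^2+(7/2)*(1-t^2)+2) := by positivity
    linarith
  · have hh0 : (0:ℝ) ≤ (1-t^2)*(1+(1-t^2)+(1-t^2)^2+(1-t^2)^3) := by positivity
    have hinner : (2:ℝ) ≤ (7/2)*(1-t^2)^3+2*(1-t^2)^2+(7/2)*(1-t^2)+2 := by
      nlinarith [pow_nonneg h1 3, sq_nonneg (1-t^2)]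
    have hh1 : (1-2*m) ≤ (1-2*m)*t^2*((7/2)*(1-t^2)^3+2*(1-t^2)^2+(7/2)*(1-t^2)+2) := by
      calc (1-2*m) = ((1-2*m)*(1/2))*2 := by ring
        _ ≤ ((1-2*m)*t^2)*((7/2)*(1-t^2)^3+2*(1-t^2)^2+(7/2)*(1-t^2)+2) := by
            apply mul_le_mul (by nlinarith) hinner (by norm_num) (by positivity)
    linarith

noncomputable def Fd (m t : ℝ) : ℝ :=
  Real.sqrt 2 * ((-2*t^2+4*m*t^4)*(1-2*m)*(1-2*m*t^2)*Real.sqrt (1-m*t^2)^2*2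
      + (1-2*m*t^2+2*m^2*t^4)*(4*(1-2*m*t^2)*Real.sqrt (1-m*t^2)^2
        + 4*t^2*(1-2*m)*Real.sqrt (1-m*t^2)^2 + (1-2*m)*(1-2*m*t^2)*t^2)) /
    (2*(1-2*m)^2*(1-2*m*t^2)^2*Real.sqrt (1-t^2)*Real.sqrt (1-m*t^2)^3)

lemma hasDerivAt_Fi {m t : ℝ} (hm2 : m < 1/2) (ht : 0 < t) (ht1 : t < 1) :
    HasDerivAt (fun m => Fi m t) (Fd m t) m := by
  have ht2 : t^2 < 1 := by nlinarith
  have hCpos : 0 < 1 - m*t^2 := by nlinarith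
  have hApos : 0 < 1 - 2*m := by linarith
  have hBpos : 0 < 1 - 2*m*t^2 := by nlinarith
  have hSTpos : 0 < 1 - t^2 := by linarith
  set st := Real.sqrt (1 - t^2) with hst_def
  have hstpos : 0 < st := Real.sqrt_pos.mpr hSTpos
  have hscpos : 0 < Real.sqrt (1 - m*t^2) := Real.sqrt_pos.mpr hCpos
  have hN : HasDerivAt (fun m : ℝ => 1 - 2*m*t^2 + 2*m^2*t^4) (-2*t^2 + 4*m*t^4) m := by
    have h1 := (((hasDerivAt_id m).const_mul 2).mul_const (t^2)).const_sub 1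
    have h2 := ((hasDerivAt_pow 2 m).const_mul 2).mul_const (t^4)
    exact (h1.add h2).congr_deriv (by push_cast; ring)
  have hA : HasDerivAt (fun m : ℝ => 1 - 2*m) (-2) m := by
    have := ((hasDerivAt_id m).const_mul 2).const_sub 1
    exact this.congr_deriv (by ring)
  have hB : HasDerivAt (fun m : ℝ => 1 - 2*m*t^2) (-2*t^2) m := by
    have := (((hasDerivAt_id m).const_mul 2).mul_const (t^2)).const_sub 1
    exact this.congr_deriv (by ring)
  have hI : HasDerivAt (fun m : ℝ => 1 - m*t^2) (-t^2) m := by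
    have := ((hasDerivAt_id m).mul_const (t^2)).const_sub 1
    exact this.congr_deriv (by ring)
  have hsc : HasDerivAt (fun m : ℝ => Real.sqrt (1 - m*t^2))
      (1 / (2 * Real.sqrt (1 - m*t^2)) * (-t^2)) m :=
    (Real.hasDerivAt_sqrt hCpos.ne').comp m hI
  have hu : HasDerivAt (fun m : ℝ => Real.sqrt 2 * (1 - 2*m*t^2 + 2*m^2*t^4))
      (Real.sqrt 2 * (-2*t^2 + 4*m*t^4)) m := hN.const_mul _
  have hv : HasDerivAt (fun m : ℝ => (1 - 2*m) * (1 - 2*m*t^2) * st * Real.sqrt (1 - m*t^2))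
      (((-2) * (1-2*m*t^2) + (1-2*m) * (-2*t^2)) * st * Real.sqrt (1 - m*t^2)
        + (1-2*m) * (1-2*m*t^2) * st * (1 / (2 * Real.sqrt (1 - m*t^2)) * (-t^2))) m :=
    ((hA.mul hB).mul_const st).mul hsc
  have hvne : (1 - 2*m) * (1 - 2*m*t^2) * st * Real.sqrt (1 - m*t^2) ≠ 0 := by positivity
  have hD := hu.div hv hvne
  refine hD.congr_deriv (Eq.symm ?_)
  unfold Fd
  rw [← hst_def]
  set sc := Real.sqrt (1 - m*t^2) with hsc_def
  have h1 : sc ≠ 0 := ne_of_gt hscpos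
  have h2 : st ≠ 0 := ne_of_gt hstpos
  have h3 : (1 - 2*m) ≠ 0 := ne_of_gt hApos
  have h4 : (1 - 2*m*t^2) ≠ 0 := ne_of_gt hBpos
  field_simp
  ring

lemma Fd_eq {m t : ℝ} (hC : 0 < 1 - m*t^2) (hA : (1:ℝ) - 2*m ≠ 0) (hB : (1:ℝ) - 2*m*t^2 ≠ 0)
    (hST : 0 < 1 - t^2) :
    Fd m t = Real.sqrt 2 * Qp m t /
      ((1-2*m)^2 * (1-2*m*t^2)^2 * Real.sqrt (1-t^2) * Real.sqrt (1-m*t^2)^3) := by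
  have hst : Real.sqrt (1-t^2) ≠ 0 := ne_of_gt (Real.sqrt_pos.mpr hST)
  have hsc : Real.sqrt (1-m*t^2) ≠ 0 := ne_of_gt (Real.sqrt_pos.mpr hC)
  unfold Fd Qp
  rw [Real.sq_sqrt hC.le]
  field_simp
  ring

lemma Fd_pos {m t : ℝ} (hm : 0 < m) (hm2 : m < 1/2) (ht : 0 < t) (ht1 : t < 1) :
    0 < Fd m t := by
  have ht2 : t^2 < 1 := by nlinarith
  have hC : 0 < 1 - m*t^2 := by nlinarith
  have hA : 0 < 1 - 2*m := by linarith
  have hB : 0 < 1 - 2*m*t^2 := by nlinarith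
  have hST : 0 < 1 - t^2 := by linarith
  rw [Fd_eq hC (ne_of_gt hA) (ne_of_gt hB) hST]
  have hq := Qp_pos hm hm2 ht.le ht1.le
  have h2 : (0:ℝ) < Real.sqrt 2 := by positivity
  have h3 : (0:ℝ) < Real.sqrt (1-t^2) := Real.sqrt_pos.mpr hST
  have h4 : (0:ℝ) < Real.sqrt (1-m*t^2) := Real.sqrt_pos.mpr hC
  positivity

lemma Qp_le {m t : ℝ} (hm : 0 ≤ m) (hm2 : m ≤ 1/2) (ht : 0 ≤ t) (ht1 : t ≤ 1) :
    Qp m t ≤ 16 := by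
  have h2 : t^2 ≤ 1 := by nlinarith
  have h4 : t^4 ≤ 1 := by nlinarith
  have h6 : t^6 ≤ 1 := by nlinarith
  have h8 : t^8 ≤ 1 := by nlinarith
  have hm4 : m^4 ≤ (1/2)^4 := by
    apply pow_le_pow_left₀ hm hm2
  have hm3 : m^3 ≤ (1/2)^3 := pow_le_pow_left₀ hm hm2 3
  have hm2' : m^2 ≤ (1/2)^2 := pow_le_pow_left₀ hm hm2 2
  unfold Qp
  nlinarith [mul_nonneg hm (pow_nonneg ht 2), mul_nonneg (pow_nonneg hm 2) (pow_nonneg ht 6),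
    mul_nonneg (pow_nonneg hm 3) (pow_nonneg ht 6),
    mul_nonneg (pow_nonneg hm 1) (pow_nonneg ht 4),
    mul_nonneg (pow_nonneg hm 2) (pow_nonneg ht 4),
    mul_nonneg (pow_nonneg hm 3) (pow_nonneg ht 8),
    mul_nonneg (pow_nonneg hm 4) (pow_nonneg ht 8)]

lemma Fd_bound {m t α : ℝ} (hα : 0 < α) (hm : 0 < m) (hm2 : α ≤ 1 - 2*m)
    (ht : 0 < t) (ht1 : t < 1) :
    |Fd m t| ≤ (128 * Real.sqrt 2 / α^4) / Real.sqrt (1 - t^2) := by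
  have hm2' : m < 1/2 := by linarith
  have ht2 : t^2 < 1 := by nlinarith
  have hC : (1:ℝ)/2 ≤ 1 - m*t^2 := by nlinarith
  have hCp : 0 < 1 - m*t^2 := by linarith
  have hA : α ≤ 1 - 2*m := hm2
  have hB : α ≤ 1 - 2*m*t^2 := by nlinarith
  have hST : 0 < 1 - t^2 := by linarith
  have hstp : 0 < Real.sqrt (1-t^2) := Real.sqrt_pos.mpr hST
  have hscp : 0 < Real.sqrt (1-m*t^2) := Real.sqrt_pos.mpr hCp
  have hsc3 : (1:ℝ)/8 ≤ Real.sqrt (1-m*t^2)^3 := by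
    have h12 : (1:ℝ)/2 ≤ Real.sqrt (1-m*t^2) := by
      rw [show (1:ℝ)/2 = Real.sqrt (1/4) by rw [show (1:ℝ)/4 = (1/2)^2 by norm_num, Real.sqrt_sq]; norm_num]
      exact Real.sqrt_le_sqrt (by linarith)
    calc (1:ℝ)/8 = (1/2)^3 := by norm_num
      _ ≤ Real.sqrt (1-m*t^2)^3 := pow_le_pow_left₀ (by norm_num) h12 3
  have hApos : (0:ℝ) < 1 - 2*m := lt_of_lt_of_le hα hA
  have hBpos : (0:ℝ) < 1 - 2*m*t^2 := lt_of_lt_of_le hα hB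
  have hDpos : (0:ℝ) < (1-2*m)^2 * (1-2*m*t^2)^2 * Real.sqrt (1-t^2) * Real.sqrt (1-m*t^2)^3 :=
    mul_pos (mul_pos (mul_pos (pow_pos hApos 2) (pow_pos hBpos 2)) hstp) (pow_pos hscp 3)
  rw [abs_of_pos (Fd_pos hm hm2' ht ht1), Fd_eq hCp (ne_of_gt hApos) (ne_of_gt hBpos) hST]
  rw [div_le_div_iff₀ hDpos hstp]
  have hq16 := Qp_le hm.le hm2'.le ht.le ht1.le
  have hqpos := Qp_pos hm hm2' ht.le ht1.le
  have hden : α^4 * (1/8) ≤ (1-2*m)^2 * (1-2*m*t^2)^2 * Real.sqrt (1-m*t^2)^3 := by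
    have h1 : α^2 ≤ (1-2*m)^2 := by nlinarith
    have h2 : α^2 ≤ (1-2*m*t^2)^2 := by nlinarith
    calc α^4 * (1/8) = (α^2 * α^2) * (1/8) := by ring
      _ ≤ ((1-2*m)^2 * (1-2*m*t^2)^2) * (Real.sqrt (1-m*t^2)^3) := by
          apply mul_le_mul (mul_le_mul h1 h2 (by positivity) (by positivity)) hsc3 (by norm_num)
            (by positivity)
      _ = _ := by ring
  calc Real.sqrt 2 * Qp m t * Real.sqrt (1-t^2)
      ≤ (16 * Real.sqrt 2) * Real.sqrt (1-t^2) := by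
        have h0 : (0:ℝ) ≤ Real.sqrt 2 := Real.sqrt_nonneg 2
        nlinarith [mul_nonneg (mul_nonneg (sub_nonneg.mpr hq16) h0) hstp.le]
    _ = (128 * Real.sqrt 2 / α^4) * ((α^4 * (1/8)) * Real.sqrt (1-t^2)) := by
        field_simp; ring
    _ ≤ (128 * Real.sqrt 2 / α^4) * (((1-2*m)^2 * (1-2*m*t^2)^2 * Real.sqrt (1-m*t^2)^3)
          * Real.sqrt (1-t^2)) := by
        apply mul_le_mul_of_nonneg_left (mul_le_mul_of_nonneg_right hden hstp.le) (by positivity)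
    _ = 128 * Real.sqrt 2 / α^4 * ((1-2*m)^2 * (1-2*m*t^2)^2 * Real.sqrt (1-t^2)
          * Real.sqrt (1-m*t^2)^3) := by ring

lemma ae_uIoc01 {P : ℝ → Prop} (h : ∀ t ∈ Set.Ioo (0:ℝ) 1, P t) :
    ∀ᵐ t : ℝ, t ∈ Set.uIoc (0:ℝ) 1 → P t := by
  have hone : ∀ᵐ t : ℝ, t ≠ (1:ℝ) := by
    rw [ae_iff]
    have : {a : ℝ | ¬a ≠ 1} = {(1:ℝ)} := by ext t; simp
    rw [this]; exact measure_singleton 1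
  filter_upwards [hone] with t ht1 ht
  rw [Set.uIoc_of_le (by norm_num : (0:ℝ) ≤ 1)] at ht
  exact h t ⟨ht.1, lt_of_le_of_ne ht.2 ht1⟩

lemma sc_half {m t : ℝ} (hm2 : m ≤ 1/2) (ht1 : t^2 ≤ 1) :
    (1:ℝ)/2 ≤ Real.sqrt (1 - m*t^2) := by
  rw [show (1:ℝ)/2 = Real.sqrt (1/4) by
    rw [show (1:ℝ)/4 = (1/2)^2 by norm_num, Real.sqrt_sq]; norm_num]
  apply Real.sqrt_le_sqrt
  nlinarith [sq_nonneg t]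

lemma intE {m : ℝ} (hm : 0 ≤ m) (hm2 : m ≤ 1/2) :
    IntervalIntegrable (fun t => Real.sqrt (1-m*t^2) / Real.sqrt (1-t^2)) volume 0 1 := by
  apply intAux ((by fun_prop : Measurable fun t : ℝ =>
    Real.sqrt (1-m*t^2) / Real.sqrt (1-t^2)).aestronglyMeasurable) (by norm_num : (0:ℝ) ≤ 1)
  intro t ht
  have hst : 0 < Real.sqrt (1-t^2) := Real.sqrt_pos.mpr (by nlinarith [ht.1, ht.2])
  rw [abs_of_nonneg (by positivity)]
  rw [show (1:ℝ) / Real.sqrt (1-t^2) = 1 / Real.sqrt (1-t^2) from rfl, div_le_div_iff₀ hst hst]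
  have h1 : Real.sqrt (1-m*t^2) ≤ 1 := Real.sqrt_le_one.mpr (by nlinarith [ht.1, ht.2, sq_nonneg t])
  nlinarith [hst.le]


lemma intK {m : ℝ} (hm : 0 ≤ m) (hm2 : m ≤ 1/2) :
    IntervalIntegrable (fun t => 1 / (Real.sqrt (1-t^2) * Real.sqrt (1-m*t^2))) volume 0 1 := by
  apply intAux ((by fun_prop : Measurable fun t : ℝ =>
    1 / (Real.sqrt (1-t^2) * Real.sqrt (1-m*t^2))).aestronglyMeasurable) (by norm_num : (0:ℝ) ≤ 2)
  intro t ht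
  have hst : 0 < Real.sqrt (1-t^2) := Real.sqrt_pos.mpr (by nlinarith [ht.1, ht.2])
  have hsc : (1:ℝ)/2 ≤ Real.sqrt (1-m*t^2) := sc_half hm2 (by nlinarith [ht.1, ht.2])
  rw [abs_of_nonneg (by positivity)]
  rw [div_le_div_iff₀ (by positivity) hst]
  nlinarith [hst.le]

lemma intPi {m : ℝ} (hm : 0 ≤ m) (hm2 : m < 1/2) :
    IntervalIntegrable (fun t => 1 / ((1-2*m*t^2) * Real.sqrt (1-t^2) * Real.sqrt (1-m*t^2)))
      volume 0 1 := by
  apply intAux ((by fun_prop : Measurable fun t : ℝ =>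
    1 / ((1-2*m*t^2) * Real.sqrt (1-t^2) * Real.sqrt (1-m*t^2))).aestronglyMeasurable)
    (div_nonneg (by norm_num) (by linarith) : (0:ℝ) ≤ 2 / (1-2*m))
  intro t ht
  have hst : 0 < Real.sqrt (1-t^2) := Real.sqrt_pos.mpr (by nlinarith [ht.1, ht.2])
  have hsc : (1:ℝ)/2 ≤ Real.sqrt (1-m*t^2) := sc_half hm2.le (by nlinarith [ht.1, ht.2])
  have ht2 : t^2 ≤ 1 := by nlinarith [ht.1, ht.2]
  have hB : 1-2*m ≤ 1-2*m*t^2 := by nlinarith [mul_nonneg hm (sub_nonneg.mpr ht2)]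
  have hA : (0:ℝ) < 1-2*m := by linarith
  have hBpos : (0:ℝ) < 1-2*m*t^2 := by linarith
  have hscp : (0:ℝ) < Real.sqrt (1-m*t^2) := by linarith
  rw [abs_of_nonneg (by positivity)]
  rw [div_le_div_iff₀ (by positivity) hst]
  have key : (1-2*m) * (1/2) * Real.sqrt (1-t^2) ≤ (1-2*m*t^2) * Real.sqrt (1-m*t^2) * Real.sqrt (1-t^2) := by
    apply mul_le_mul_of_nonneg_right ?_ hst.le
    apply mul_le_mul hB hsc (by norm_num) (by linarith)
  calc (1:ℝ) * Real.sqrt (1-t^2) = (2/(1-2*m)) * ((1-2*m) * (1/2) * Real.sqrt (1-t^2)) := by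
        field_simp
    _ ≤ (2/(1-2*m)) * ((1-2*m*t^2) * Real.sqrt (1-m*t^2) * Real.sqrt (1-t^2)) := by
        apply mul_le_mul_of_nonneg_left key (by positivity)
    _ = 2/(1-2*m) * ((1-2*m*t^2) * Real.sqrt (1-t^2) * Real.sqrt (1-m*t^2)) := by ring

lemma intFi {m : ℝ} (hm : 0 ≤ m) (hm2 : m < 1/2) :
    IntervalIntegrable (fun t => Fi m t) volume 0 1 := by
  apply intAux ((by unfold Fi; fun_prop : Measurable fun t : ℝ => Fi m t).aestronglyMeasurable)
    (div_nonneg (by positivity) (by positivity) : (0:ℝ) ≤ 6 * Real.sqrt 2 / (1-2*m)^2)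
  intro t ht
  have hst : 0 < Real.sqrt (1-t^2) := Real.sqrt_pos.mpr (by nlinarith [ht.1, ht.2])
  have hsc : (1:ℝ)/2 ≤ Real.sqrt (1-m*t^2) := sc_half hm2.le (by nlinarith [ht.1, ht.2])
  have ht2 : t^2 ≤ 1 := by nlinarith [ht.1, ht.2]
  have hB : 1-2*m ≤ 1-2*m*t^2 := by nlinarith [mul_nonneg hm (sub_nonneg.mpr ht2)]
  have hA : (0:ℝ) < 1-2*m := by linarith
  have hBpos : (0:ℝ) < 1-2*m*t^2 := by linarith
  have hscp : (0:ℝ) < Real.sqrt (1-m*t^2) := by linarith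
  have hN0 : (0:ℝ) < 1 - 2*m*t^2 + 2*m^2*t^4 := by nlinarith [ht.1, ht.2, sq_nonneg (1-2*m*t^2)]
  have hN3 : (1:ℝ) - 2*m*t^2 + 2*m^2*t^4 ≤ 3 := by nlinarith [ht.1, ht.2, mul_nonneg hm (sq_nonneg t)]
  unfold Fi
  rw [abs_of_nonneg (by positivity)]
  rw [div_le_div_iff₀ (by positivity) hst]
  have hr2 : (0:ℝ) < Real.sqrt 2 := by positivity
  calc Real.sqrt 2 * (1 - 2*m*t^2 + 2*m^2*t^4) * Real.sqrt (1-t^2)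
      ≤ Real.sqrt 2 * 3 * Real.sqrt (1-t^2) := by
        nlinarith [mul_nonneg (mul_nonneg (sub_nonneg.mpr hN3) hr2.le) hst.le]
    _ = (6*Real.sqrt 2/(1-2*m)^2) * ((1-2*m) * (1-2*m) * (1/2) * Real.sqrt (1-t^2)) := by
        field_simp; ring
    _ ≤ (6*Real.sqrt 2/(1-2*m)^2) * ((1-2*m) * (1-2*m*t^2) * Real.sqrt (1-t^2) * Real.sqrt (1-m*t^2)) := by
        apply mul_le_mul_of_nonneg_left ?_ (by positivity)
        calc (1-2*m) * (1-2*m) * (1/2) * Real.sqrt (1-t^2)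
            = ((1-2*m) * Real.sqrt (1-t^2)) * ((1-2*m) * (1/2)) := by ring
          _ ≤ ((1-2*m) * Real.sqrt (1-t^2)) * ((1-2*m*t^2) * Real.sqrt (1-m*t^2)) := by
              apply mul_le_mul_of_nonneg_left ?_ (by positivity)
              apply mul_le_mul hB hsc (by norm_num) (by linarith)
          _ = (1-2*m) * (1-2*m*t^2) * Real.sqrt (1-t^2) * Real.sqrt (1-m*t^2) := by ring

lemma combine {m : ℝ} (hm : 0 < m) (hm2 : m < 1/2) :
    Real.sqrt 2 / (2*(1-2*m)) *
      (2 * (∫ t in (0:ℝ)..1, Real.sqrt (1-m*t^2) / Real.sqrt (1-t^2))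
       - (∫ t in (0:ℝ)..1, 1 / (Real.sqrt (1-t^2) * Real.sqrt (1-m*t^2)))
       + (∫ t in (0:ℝ)..1, 1 / ((1-2*m*t^2) * Real.sqrt (1-t^2) * Real.sqrt (1-m*t^2))))
    = ∫ t in (0:ℝ)..1, Fi m t := by
  have hE := intE hm.le hm2.le
  have hK := intK hm.le hm2.le
  have hP := intPi hm.le hm2
  rw [← intervalIntegral.integral_const_mul 2, ← intervalIntegral.integral_sub (hE.const_mul 2) hK,
    ← intervalIntegral.integral_add ((hE.const_mul 2).sub hK) hP,
    ← intervalIntegral.integral_const_mul]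
  apply intervalIntegral.integral_congr_ae
  apply ae_uIoc01
  intro t ht
  have ht2 : t^2 < 1 := by nlinarith [ht.1, ht.2]
  have hC : (0:ℝ) < 1 - m*t^2 := by nlinarith
  have hA : (0:ℝ) < 1 - 2*m := by linarith
  have hB : (0:ℝ) < 1 - 2*m*t^2 := by nlinarith
  have hST : (0:ℝ) < 1 - t^2 := by linarith
  have hst : (0:ℝ) < Real.sqrt (1-t^2) := Real.sqrt_pos.mpr hST
  have hsc : (0:ℝ) < Real.sqrt (1-m*t^2) := Real.sqrt_pos.mpr hC
  have hsq : Real.sqrt (1-m*t^2)^2 = 1-m*t^2 := Real.sq_sqrt hC.le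
  unfold Fi
  rw [show (1:ℝ) - 2*m*t^2 + 2*m^2*t^4
      = 2*Real.sqrt (1-m*t^2)^4 - 2*Real.sqrt (1-m*t^2)^2 + 1 by
    rw [show Real.sqrt (1-m*t^2)^4 = (Real.sqrt (1-m*t^2)^2)^2 by ring, hsq]; ring]
  rw [show (1:ℝ) - 2*m*t^2 = 2*Real.sqrt (1-m*t^2)^2 - 1 by rw [hsq]; ring]
  have hBne : 2*Real.sqrt (1-m*t^2)^2 - 1 ≠ 0 := by rw [hsq]; intro h; nlinarith
  set st := Real.sqrt (1-t^2) with hstdef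
  set sc := Real.sqrt (1-m*t^2) with hscdef
  field_simp
  ring

lemma deriv_int {m₀ : ℝ} (hm : 0 < m₀) (hm2 : m₀ < 1/2) :
    IntervalIntegrable (Fd m₀) volume 0 1 ∧
    HasDerivAt (fun m => ∫ t in (0:ℝ)..1, Fi m t) (∫ t in (0:ℝ)..1, Fd m₀ t) m₀ := by
  set α := 1/2 - m₀ with hα_def
  have hα : 0 < α := by simp [hα_def]; linarith
  set ε := min m₀ ((1/2 - m₀)/2) with hε_def
  have hε : 0 < ε := by
    apply lt_min hm; linarith
  have hball : ∀ x ∈ Metric.ball m₀ ε, 0 < x ∧ α ≤ 1 - 2*x := by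
    intro x hx
    rw [Metric.mem_ball, Real.dist_eq, abs_lt] at hx
    constructor
    · have : ε ≤ m₀ := min_le_left _ _
      linarith [hx.1]
    · have : ε ≤ (1/2 - m₀)/2 := min_le_right _ _
      simp only [hα_def]; linarith [hx.2]
  have hboundInt : IntervalIntegrable (fun t => (128 * Real.sqrt 2 / α^4) / Real.sqrt (1-t^2))
      volume 0 1 := by
    apply intAux ((by fun_prop : Measurable fun t : ℝ =>
      (128 * Real.sqrt 2 / α^4) / Real.sqrt (1-t^2)).aestronglyMeasurable)
      (by positivity : (0:ℝ) ≤ 128 * Real.sqrt 2 / α^4)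
    intro t ht
    have hst : 0 < Real.sqrt (1-t^2) := Real.sqrt_pos.mpr (by nlinarith [ht.1, ht.2])
    rw [abs_of_nonneg (by positivity)]
  exact intervalIntegral.hasDerivAt_integral_of_dominated_loc_of_deriv_le (Metric.ball_mem_nhds m₀ hε)
    (Filter.Eventually.of_forall (fun x => (by unfold Fi; fun_prop :
        Measurable fun t : ℝ => Fi x t).aestronglyMeasurable))
    (intFi hm.le hm2)
    ((by unfold Fd; fun_prop : Measurable fun t : ℝ => Fd m₀ t).aestronglyMeasurable)
    (ae_uIoc01 (fun t ht x hx => by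
      rw [Real.norm_eq_abs]
      exact Fd_bound hα (hball x hx).1 (hball x hx).2 ht.1 ht.2))
    hboundInt
    (ae_uIoc01 (fun t ht x hx => hasDerivAt_Fi (by linarith [(hball x hx).2]) ht.1 ht.2))


theorem stmt_11 : ∀ h ∈ Ioo (-2 : ℝ) 0, 0 < deriv sitnikovT h := by
  intro h hh
  obtain ⟨h1, h2⟩ := hh
  have hm : 0 < (2+h)/4 := by linarith
  have hm2 : (2+h)/4 < 1/2 := by linarith
  obtain ⟨hFdInt, hDer⟩ := deriv_int hm hm2
  have hDpos : 0 < ∫ t in (0:ℝ)..1, Fd ((2+h)/4) t :=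
    intervalIntegral.intervalIntegral_pos_of_pos_on hFdInt
      (fun t ht => Fd_pos hm hm2 ht.1 ht.2) (by norm_num)
  -- inner derivative
  have hInner : HasDerivAt (fun x : ℝ => (2+x)/4) (1/4) h := by
    have := ((hasDerivAt_id h).const_add 2).div_const 4
    simpa using this
  have hG : HasDerivAt (fun x : ℝ => ∫ t in (0:ℝ)..1, Fi ((2+x)/4) t)
      ((∫ t in (0:ℝ)..1, Fd ((2+h)/4) t) * (1/4)) h := HasDerivAt.comp (h₂ := fun m => ∫ t in (0:ℝ)..1, Fi m t) h hDer hInner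
  -- sitnikovT agrees with G near h
  have heq : sitnikovT =ᶠ[nhds h] (fun x : ℝ => ∫ t in (0:ℝ)..1, Fi ((2+x)/4) t) := by
    apply Filter.eventuallyEq_of_mem (Ioo_mem_nhds h1 h2)
    intro x hx
    obtain ⟨hx1, hx2⟩ := hx
    have hk2 : (Real.sqrt (2+x)/2)^2 = (2+x)/4 := by
      rw [div_pow, Real.sq_sqrt (by linarith : (0:ℝ) ≤ 2+x)]; norm_num
    have hxm : 0 < (2+x)/4 := by linarith
    have hxm2 : (2+x)/4 < 1/2 := by linarith
    simp only [sitnikovT, ellipticK, ellipticE, ellipticPi]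
    simp only [hk2]
    exact combine hxm hxm2
  have hT : HasDerivAt sitnikovT ((∫ t in (0:ℝ)..1, Fd ((2+h)/4) t) * (1/4)) h :=
    hG.congr_of_eventuallyEq heq
  rw [hT.deriv]
  positivity
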